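/- Let n ≥ 2 and let Ω ⊆ ℝ^n be a nonempty open connected set whose closure is contained in the complement of a non-degenerate solid cone C ⊂ ℝ^n. Let c : Ω → ℝ be continuous with c(x) ≥ 0 for all x ∈ Ω. Suppose u is continuous on the closure of Ω, twice continuously differentiable on Ω, and satisfies Δu(x) ≥ c(x)·u(x) for all x ∈ Ω, u(x) ≤ 0 for all x in the frontier of Ω, and sup_Ω u < +∞. Then u(x) ≤ 0 for all x ∈ Ω. -/

import Mathlib

open scoped RealInnerProductSpace
open Filter Set

/-- 1D second derivative test at a local max. -/
lemma sec_deriv_test_aux {g g' : ℝ → ℝ} {A : ℝ} (hmax : IsLocalMax g 0)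
    (hg : ∀ᶠ s in nhds (0:ℝ), HasDerivAt g (g' s) s)
    (hg' : HasDerivAt g' A 0) : A ≤ 0 := by
  by_contra hA
  push_neg at hA
  have h0 : g' 0 = 0 := hmax.hasDerivAt_eq_zero hg.self_of_nhds
  have hslope : Tendsto (slope g' 0) (nhdsWithin 0 {(0:ℝ)}ᶜ) (nhds A) :=
    hasDerivAt_iff_tendsto_slope.1 hg'
  have hpos : ∀ᶠ s in nhdsWithin 0 {(0:ℝ)}ᶜ, 0 < slope g' 0 s :=
    hslope.eventually (eventually_gt_nhds hA)
  have hpos' : ∀ᶠ s in nhdsWithin (0:ℝ) (Set.Ioi 0), 0 < slope g' 0 s :=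
    nhdsWithin_mono 0 (fun s hs => ne_of_gt hs) hpos
  obtain ⟨δ₁, hδ₁, H1⟩ := Metric.eventually_nhds_iff.1 (hg.and hmax)
  rw [eventually_nhdsWithin_iff] at hpos'
  obtain ⟨δ₂, hδ₂, H2⟩ := Metric.eventually_nhds_iff.1 hpos'
  set δ := min δ₁ δ₂ with hδdef
  have hδ : 0 < δ := lt_min hδ₁ hδ₂
  have hmem : ∀ s ∈ Set.Icc (0:ℝ) (δ/2), dist s 0 < δ₁ ∧ dist s 0 < δ₂ := by
    intro s hs
    have : |s| < δ := by
      rw [abs_of_nonneg hs.1]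
      calc s ≤ δ/2 := hs.2
      _ < δ := by linarith
    constructor <;> · rw [Real.dist_eq, sub_zero] ; exact lt_of_lt_of_le this (by simp [hδdef])
  have hmono : StrictMonoOn g (Set.Icc 0 (δ/2)) := by
    apply strictMonoOn_of_deriv_pos (convex_Icc _ _)
    · intro s hs
      exact ((H1 (hmem s hs).1).1.continuousAt).continuousWithinAt
    · intro s hs
      rw [interior_Icc] at hs
      have hsm : s ∈ Set.Icc (0:ℝ) (δ/2) := ⟨hs.1.le, hs.2.le⟩
      have hd : deriv g s = g' s := (H1 (hmem s hsm).1).1.deriv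
      rw [hd]
      have hsl := H2 (hmem s hsm).2 hs.1
      rw [slope_def_field, h0, sub_zero, sub_zero] at hsl
      have := mul_pos hsl hs.1
      rwa [div_mul_cancel₀] at this
      exact ne_of_gt hs.1
  have hlt : g 0 < g (δ/2) :=
    hmono (Set.left_mem_Icc.2 (by linarith)) (Set.right_mem_Icc.2 (by linarith)) (by linarith)
  have hle : g (δ/2) ≤ g 0 := by
    refine (H1 ?_).2
    rw [Real.dist_eq, sub_zero, abs_of_nonneg (by linarith : (0:ℝ) ≤ δ/2)]
    calc δ/2 < δ := by linarith
    _ ≤ δ₁ := min_le_left _ _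
  linarith

/-- Directional second derivative test at a local max. -/
lemma sec_test_dir {n : ℕ} {h : EuclideanSpace ℝ (Fin n) → ℝ}
    {D : EuclideanSpace ℝ (Fin n) → (EuclideanSpace ℝ (Fin n) →L[ℝ] ℝ)}
    {z v : EuclideanSpace ℝ (Fin n)} {D2 : EuclideanSpace ℝ (Fin n) →L[ℝ] ℝ}
    (hmax : IsLocalMax h z)
    (hD : ∀ᶠ y in nhds z, HasFDerivAt h (D y) y)
    (hD2 : HasFDerivAt (fun y => D y v) D2 z) : D2 v ≤ 0 := by
  have hline : ∀ s : ℝ, HasDerivAt (fun s : ℝ => z + s • v) v s := fun s => by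
    simpa using ((hasDerivAt_id s).smul_const v).const_add z
  have htend : Tendsto (fun s : ℝ => z + s • v) (nhds 0) (nhds z) := by
    have : Continuous (fun s : ℝ => z + s • v) := by continuity
    simpa using this.tendsto 0
  apply sec_deriv_test_aux (g := fun s => h (z + s • v)) (g' := fun s => D (z + s • v) v)
  · have := htend.eventually hmax
    refine this.mono fun s hs => ?_
    simpa using hs
  · exact (htend.eventually hD).mono fun s hs => hs.comp_hasDerivAt s (hline s)
  · have h00 : z + (0:ℝ) • v = z := by simp
    rw [← h00] at hD2
    exact hD2.comp_hasDerivAt 0 (hline 0)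

private lemma phi_le {n : ℕ} (hn : 2 ≤ n) {T γ tt : ℝ} (hT0 : 0 ≤ T) (hT1 : T < 1)
    (hγ2 : 2 ≤ γ) (hγT : γ * (1 - T^2) = (n:ℝ))
    (ht1 : -1 ≤ tt) (htT : tt ≤ T) :
    γ*tt^2 + ((n:ℝ)-1)*tt - γ ≤ -2⁻¹ := by
  have hn2 : (2:ℝ) ≤ (n:ℝ) := by exact_mod_cast hn
  have hγpos : (0:ℝ) < γ := by linarith
  rcases le_or_gt 0 tt with h0 | h0
  · have htt1 : tt ≤ 1 := le_trans htT hT1.le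
    have h2 : tt^2 ≤ T^2 := by nlinarith
    have e1 : γ*tt^2 - γ ≤ -(n:ℝ) := by nlinarith
    have e2 : ((n:ℝ)-1)*tt ≤ (n:ℝ)-1 := by nlinarith
    linarith
  · rcases le_or_gt tt (-2⁻¹) with h1 | h1
    · have h2 : tt^2 ≤ 1 := by nlinarith
      have e1 : γ*tt^2 - γ ≤ 0 := by nlinarith
      have e2 : ((n:ℝ)-1)*tt ≤ -2⁻¹ := by nlinarith
      linarith
    · have h2 : tt^2 ≤ 4⁻¹ := by nlinarith
      have e1 : γ*tt^2 - γ ≤ -(3/2) := by nlinarith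
      have e2 : ((n:ℝ)-1)*tt ≤ 0 := by nlinarith
      linarith

lemma bracket_neg {n : ℕ} (hn : 2 ≤ n) {T γ Cc μ tt : ℝ} (hT0 : 0 ≤ T) (hT1 : T < 1)
    (hγ : γ = n / (1 - T^2)) (hC : Cc = 1 + Real.exp γ / γ)
    (hμ0 : 0 < μ) (hμhalf : μ ≤ 2⁻¹) (hμb : μ*((n:ℝ)+1)*Cc ≤ Real.exp (-γ) / 4)
    (ht1 : -1 ≤ tt) (htT : tt ≤ T) :
    μ*(μ+(n:ℝ)-2)*(Cc - γ⁻¹*Real.exp (γ*tt)) + ((n:ℝ)-1)*tt*Real.exp (γ*tt)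
      + γ*tt^2*Real.exp (γ*tt) - γ*Real.exp (γ*tt) < 0 := by
  have hn2 : (2:ℝ) ≤ (n:ℝ) := by exact_mod_cast hn
  have h1T : 0 < 1 - T^2 := by nlinarith
  have hγpos : 0 < γ := by rw [hγ]; apply div_pos (by linarith) h1T
  have hγn : (n:ℝ) ≤ γ := by
    rw [hγ, le_div_iff₀ h1T]; nlinarith
  have hγ2 : 2 ≤ γ := le_trans hn2 hγn
  have hγT : γ * (1 - T^2) = (n:ℝ) := by
    rw [hγ]; field_simp
  have hphi := phi_le hn hT0 hT1 hγ2 hγT ht1 htT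
  set A := Real.exp (γ*tt) with hA
  have hApos : 0 < A := Real.exp_pos _
  have hAT : Real.exp (-γ) ≤ A := by
    apply Real.exp_le_exp.2; nlinarith
  have hCpos : 0 < Cc := by
    rw [hC]; positivity
  have hK1 : 0 ≤ μ*(μ+(n:ℝ)-2) := by nlinarith
  have hK2 : μ*(μ+(n:ℝ)-2) ≤ μ*((n:ℝ)+1) := by nlinarith
  have hfC : Cc - γ⁻¹*A ≤ Cc := by
    have : 0 < γ⁻¹*A := by positivity
    linarith
  have hterm1 : μ*(μ+(n:ℝ)-2)*(Cc - γ⁻¹*A) ≤ Real.exp (-γ)/4 :=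
    calc μ*(μ+(n:ℝ)-2)*(Cc - γ⁻¹*A) ≤ μ*(μ+(n:ℝ)-2)*Cc :=
          mul_le_mul_of_nonneg_left hfC hK1
    _ ≤ μ*((n:ℝ)+1)*Cc := mul_le_mul_of_nonneg_right hK2 hCpos.le
    _ ≤ Real.exp (-γ)/4 := hμb
  have hterm2 : ((n:ℝ)-1)*tt*A + γ*tt^2*A - γ*A ≤ -(Real.exp (-γ)/2) := by
    have h1 : ((n:ℝ)-1)*tt*A + γ*tt^2*A - γ*A = (γ*tt^2 + ((n:ℝ)-1)*tt - γ)*A := by ring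
    rw [h1]
    calc (γ*tt^2 + ((n:ℝ)-1)*tt - γ)*A ≤ (-2⁻¹)*A :=
          mul_le_mul_of_nonneg_right hphi hApos.le
    _ ≤ (-2⁻¹)*Real.exp (-γ) := by linarith
    _ = -(Real.exp (-γ)/2) := by ring
  have hexp : 0 < Real.exp (-γ) := Real.exp_pos _
  linarith

namespace ConeBarrier

variable {n : ℕ} {p e : EuclideanSpace ℝ (Fin n)} {γ Cc μ : ℝ}

noncomputable def rf (p : EuclideanSpace ℝ (Fin n)) (y : EuclideanSpace ℝ (Fin n)) : ℝ := ‖y - p‖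
noncomputable def qf (p e : EuclideanSpace ℝ (Fin n)) (y : EuclideanSpace ℝ (Fin n)) : ℝ := ⟪y - p, e⟫
noncomputable def Ef (p e : EuclideanSpace ℝ (Fin n)) (γ : ℝ) (y : EuclideanSpace ℝ (Fin n)) : ℝ :=
  Real.exp (γ * (qf p e y * (rf p y)⁻¹))
noncomputable def ff (p e : EuclideanSpace ℝ (Fin n)) (γ Cc : ℝ) (y : EuclideanSpace ℝ (Fin n)) : ℝ :=
  Cc - γ⁻¹ * Ef p e γ y
noncomputable def wf (p e : EuclideanSpace ℝ (Fin n)) (γ Cc μ : ℝ) (y : EuclideanSpace ℝ (Fin n)) : ℝ :=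
  rf p y ^ μ * ff p e γ Cc y
noncomputable def af (p e : EuclideanSpace ℝ (Fin n)) (γ Cc μ : ℝ) (y : EuclideanSpace ℝ (Fin n)) : ℝ :=
  μ * rf p y ^ μ * ((rf p y)⁻¹)^2 * ff p e γ Cc y
    + qf p e y * rf p y ^ μ * ((rf p y)⁻¹)^3 * Ef p e γ y
noncomputable def bf (p e : EuclideanSpace ℝ (Fin n)) (γ μ : ℝ) (y : EuclideanSpace ℝ (Fin n)) : ℝ :=
  -(rf p y ^ μ * (rf p y)⁻¹ * Ef p e γ y)
noncomputable def a1f (p e : EuclideanSpace ℝ (Fin n)) (γ Cc μ : ℝ) (y : EuclideanSpace ℝ (Fin n)) : ℝ :=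
  μ*(μ-2) * rf p y ^ μ * ((rf p y)⁻¹)^4 * ff p e γ Cc y
    + (2*μ-3) * qf p e y * rf p y ^ μ * ((rf p y)⁻¹)^5 * Ef p e γ y
    - γ * (qf p e y)^2 * rf p y ^ μ * ((rf p y)⁻¹)^6 * Ef p e γ y
noncomputable def a2f (p e : EuclideanSpace ℝ (Fin n)) (γ μ : ℝ) (y : EuclideanSpace ℝ (Fin n)) : ℝ :=
  (1-μ) * rf p y ^ μ * ((rf p y)⁻¹)^3 * Ef p e γ y
    + γ * qf p e y * rf p y ^ μ * ((rf p y)⁻¹)^4 * Ef p e γ y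
noncomputable def b2f (p e : EuclideanSpace ℝ (Fin n)) (γ μ : ℝ) (y : EuclideanSpace ℝ (Fin n)) : ℝ :=
  -(γ * rf p y ^ μ * ((rf p y)⁻¹)^2 * Ef p e γ y)

variable {y : EuclideanSpace ℝ (Fin n)}

lemma rf_pos (hy : y ≠ p) : 0 < rf p y := by
  simp [rf, norm_pos_iff, sub_ne_zero.2 hy]

lemma hasFDerivAt_qf (s : EuclideanSpace ℝ (Fin n)) :
    HasFDerivAt (fun y : EuclideanSpace ℝ (Fin n) => (⟪y - p, s⟫:ℝ)) (innerSL ℝ s) y := by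
  have hid : HasFDerivAt (fun y : EuclideanSpace ℝ (Fin n) => y - p)
    (ContinuousLinearMap.id ℝ _) y := (hasFDerivAt_id y).sub_const p
  have hc : HasFDerivAt (fun _ : EuclideanSpace ℝ (Fin n) => s)
    (0 : EuclideanSpace ℝ (Fin n) →L[ℝ] EuclideanSpace ℝ (Fin n)) y := hasFDerivAt_const s y
  have h := hid.inner ℝ hc
  refine h.congr_fderiv ?_
  ext v
  simp [fderivInnerCLM_apply, real_inner_comm, mul_comm]

lemma hasFDerivAt_rf (hy : y ≠ p) :
    HasFDerivAt (rf p) (((rf p y)⁻¹) • innerSL ℝ (y - p)) y := by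
  have hid : HasFDerivAt (fun y : EuclideanSpace ℝ (Fin n) => y - p)
    (ContinuousLinearMap.id ℝ _) y := (hasFDerivAt_id y).sub_const p
  have hN := hid.inner ℝ hid
  have hN0 : (⟪y - p, y - p⟫:ℝ) ≠ 0 := by
    rw [real_inner_self_eq_norm_mul_norm]
    have := rf_pos hy
    simp only [rf] at this
    positivity
  have hsq := (Real.hasDerivAt_sqrt hN0).comp_hasFDerivAt y hN
  have heq : rf p = fun y : EuclideanSpace ℝ (Fin n) => Real.sqrt (⟪y - p, y - p⟫:ℝ) := by
    funext z
    rw [rf, real_inner_self_eq_norm_mul_norm, Real.sqrt_mul_self (norm_nonneg _)]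
  rw [heq]
  refine hsq.congr_fderiv ?_
  ext v
  have hr : Real.sqrt (⟪y - p, y - p⟫:ℝ) = rf p y := by
    rw [rf, real_inner_self_eq_norm_mul_norm, Real.sqrt_mul_self (norm_nonneg _)]
  simp only [ContinuousLinearMap.smul_apply, innerSL_apply_apply, Function.comp,
    ContinuousLinearMap.coe_comp', ContinuousLinearMap.prod_apply, fderivInnerCLM_apply,
    ContinuousLinearMap.coe_id', id_eq, smul_eq_mul, hr]
  rw [real_inner_comm v (y-p)]
  have : rf p y ≠ 0 := (rf_pos hy).ne'
  field_simp
  ring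

lemma hasFDerivAt_rf_inv (hy : y ≠ p) :
    HasFDerivAt (fun y => (rf p y)⁻¹) ((-((rf p y)⁻¹)^3) • innerSL ℝ (y - p)) y := by
  have h := (hasDerivAt_inv (rf_pos hy).ne').comp_hasFDerivAt y (hasFDerivAt_rf hy)
  refine h.congr_fderiv ?_
  ext v
  simp only [ContinuousLinearMap.smul_apply, innerSL_apply_apply, smul_eq_mul, Function.comp]
  simp only [inv_pow]
  rw [pow_succ, mul_inv]
  ring

lemma hasFDerivAt_rpow (hy : y ≠ p) :
    HasFDerivAt (fun y => rf p y ^ μ) ((μ * rf p y ^ μ * ((rf p y)⁻¹)^2) • innerSL ℝ (y - p)) y := by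
  have h := (Real.hasDerivAt_rpow_const (p := μ) (Or.inl (rf_pos hy).ne')).comp_hasFDerivAt y
    (hasFDerivAt_rf hy)
  refine h.congr_fderiv ?_
  ext v
  have hr : rf p y ≠ 0 := (rf_pos hy).ne'
  simp only [ContinuousLinearMap.smul_apply, innerSL_apply_apply, smul_eq_mul, Function.comp]
  rw [Real.rpow_sub_one hr, div_eq_mul_inv]
  ring

lemma hasFDerivAt_rf_inv_pow (k : ℕ) (hy : y ≠ p) :
    HasFDerivAt (fun y => ((rf p y)⁻¹)^(k+1))
      ((-((k:ℝ)+1) * ((rf p y)⁻¹)^(k+3)) • innerSL ℝ (y - p)) y := by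
  have h := (hasDerivAt_pow (k+1) ((rf p y)⁻¹)).comp_hasFDerivAt y (hasFDerivAt_rf_inv hy)
  refine h.congr_fderiv ?_
  ext v
  simp only [ContinuousLinearMap.smul_apply, innerSL_apply_apply, smul_eq_mul, Function.comp,
    Nat.add_sub_cancel, Nat.cast_add, Nat.cast_one]
  ring

lemma hasFDerivAt_Ef (hy : y ≠ p) :
    HasFDerivAt (Ef p e γ) ((-(γ * Ef p e γ y * qf p e y * ((rf p y)⁻¹)^3)) • innerSL ℝ (y - p)
      + (γ * Ef p e γ y * (rf p y)⁻¹) • innerSL ℝ e) y := by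
  have hq : HasFDerivAt (qf p e) (innerSL ℝ e) y := hasFDerivAt_qf e
  have hg : HasFDerivAt (fun y => γ * (qf p e y * (rf p y)⁻¹))
      (γ • (qf p e y • ((-((rf p y)⁻¹)^3) • innerSL ℝ (y - p)) + (rf p y)⁻¹ • innerSL ℝ e)) y :=
    (hq.mul (hasFDerivAt_rf_inv hy)).const_mul γ
  have h := (Real.hasDerivAt_exp (γ * (qf p e y * (rf p y)⁻¹))).comp_hasFDerivAt y hg
  refine h.congr_fderiv ?_
  ext v
  simp only [ContinuousLinearMap.smul_apply, ContinuousLinearMap.add_apply, innerSL_apply_apply,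
    smul_eq_mul, Ef, ContinuousLinearMap.neg_apply, Function.comp]
  ring

lemma hasFDerivAt_ff (hy : y ≠ p) (hγ : γ ≠ 0) :
    HasFDerivAt (ff p e γ Cc) ((Ef p e γ y * qf p e y * ((rf p y)⁻¹)^3) • innerSL ℝ (y - p)
      + (-(Ef p e γ y * (rf p y)⁻¹)) • innerSL ℝ e) y := by
  have h := ((hasFDerivAt_Ef (e := e) (γ := γ) hy).const_mul γ⁻¹).const_sub Cc
  refine h.congr_fderiv ?_
  ext v
  simp only [ContinuousLinearMap.smul_apply, ContinuousLinearMap.add_apply, innerSL_apply_apply,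
    ContinuousLinearMap.neg_apply, smul_eq_mul]
  field_simp
  ring

lemma hasFDerivAt_wf (hy : y ≠ p) (hγ : γ ≠ 0) :
    HasFDerivAt (wf p e γ Cc μ) ((af p e γ Cc μ y) • innerSL ℝ (y - p)
      + (bf p e γ μ y) • innerSL ℝ e) y := by
  have h := (hasFDerivAt_rpow (μ := μ) hy).mul (hasFDerivAt_ff (e := e) (γ := γ) (Cc := Cc) hy hγ)
  refine h.congr_fderiv ?_
  ext v
  simp only [ContinuousLinearMap.smul_apply, ContinuousLinearMap.add_apply, innerSL_apply_apply,
    ContinuousLinearMap.neg_apply, smul_eq_mul, af, bf, ff]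
  ring

lemma hasFDerivAt_af (hy : y ≠ p) (hγ : γ ≠ 0) :
    HasFDerivAt (af p e γ Cc μ) ((a1f p e γ Cc μ y) • innerSL ℝ (y - p)
      + (a2f p e γ μ y) • innerSL ℝ e) y := by
  have h := ((((hasFDerivAt_rpow (μ := μ) hy).const_mul μ).mul
      (hasFDerivAt_rf_inv_pow 1 hy)).mul (hasFDerivAt_ff (e := e) (γ := γ) (Cc := Cc) hy hγ)).add
    ((((hasFDerivAt_qf (p := p) e).mul (hasFDerivAt_rpow (μ := μ) hy)).mul
      (hasFDerivAt_rf_inv_pow 2 hy)).mul (hasFDerivAt_Ef (e := e) (γ := γ) hy))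
  refine h.congr_fderiv ?_
  ext v
  simp only [ContinuousLinearMap.smul_apply, ContinuousLinearMap.add_apply, innerSL_apply_apply,
    ContinuousLinearMap.neg_apply, smul_eq_mul, af, a1f, a2f, ff, qf, Pi.mul_apply]
  ring

lemma hasFDerivAt_bf (hy : y ≠ p) :
    HasFDerivAt (bf p e γ μ) ((a2f p e γ μ y) • innerSL ℝ (y - p)
      + (b2f p e γ μ y) • innerSL ℝ e) y := by
  have h := (((hasFDerivAt_rpow (μ := μ) hy).mul (hasFDerivAt_rf_inv hy)).mul
    (hasFDerivAt_Ef (e := e) (γ := γ) hy)).neg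
  refine h.congr_fderiv ?_
  ext v
  simp only [ContinuousLinearMap.smul_apply, ContinuousLinearMap.add_apply, innerSL_apply_apply,
    ContinuousLinearMap.neg_apply, smul_eq_mul, bf, a2f, b2f, Pi.mul_apply]
  ring

lemma S_eq (hr : rf p y ≠ 0) :
    a1f p e γ Cc μ y * (rf p y)^2 + 2*(a2f p e γ μ y * qf p e y) + (n:ℝ)*af p e γ Cc μ y
      + b2f p e γ μ y
    = rf p y ^ μ * ((rf p y)⁻¹)^2
        * (μ*(μ+(n:ℝ)-2)*ff p e γ Cc y + ((n:ℝ)-1)*(qf p e y*(rf p y)⁻¹)*Ef p e γ y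
          + γ*(qf p e y*(rf p y)⁻¹)^2*Ef p e γ y - γ*Ef p e γ y) := by
  simp only [a1f, a2f, af, b2f]
  field_simp
  ring

lemma sum_inner_single (v w : EuclideanSpace ℝ (Fin n)) :
    ∑ i : Fin n, (⟪v, EuclideanSpace.single i (1:ℝ)⟫:ℝ) * ⟪w, EuclideanSpace.single i (1:ℝ)⟫
      = ⟪v, w⟫ := by
  simp only [EuclideanSpace.inner_single_right, RCLike.star_def, conj_trivial, one_mul]
  rw [PiLp.inner_apply]
  simp [RCLike.inner_apply, conj_trivial]
  exact Finset.sum_congr rfl fun i _ => mul_comm _ _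

end ConeBarrier

/-- The Euclidean Laplacian `Δu = ∑ i ∂²u/∂xᵢ²`. -/
noncomputable def laplacian {n : ℕ} (u : EuclideanSpace ℝ (Fin n) → ℝ)
    (x : EuclideanSpace ℝ (Fin n)) : ℝ :=
  ∑ i : Fin n, fderiv ℝ (fun y => fderiv ℝ u y (EuclideanSpace.single i 1)) x
    (EuclideanSpace.single i 1)

open ConeBarrier

/-- Maximum principle in Euclidean domains contained in the complement of a
non-degenerate solid cone. -/
theorem maximum_principle_complement_of_cone
    (n : ℕ) (hn : 2 ≤ n)
    (Ω : Set (EuclideanSpace ℝ (Fin n)))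
    (hΩopen : IsOpen Ω) (hΩconn : IsConnected Ω)
    (p e : EuclideanSpace ℝ (Fin n)) (θ : ℝ)
    (he : ‖e‖ = 1) (hθ₀ : 0 < θ) (hθ₁ : θ ≤ Real.pi / 2)
    -- the closure of Ω is contained in the complement of the cone
    -- C = {x : ⟨x − p, e⟩ ≥ ‖x − p‖·cos θ}
    (hcone : ∀ x ∈ closure Ω, ⟪x - p, e⟫ < ‖x - p‖ * Real.cos θ)
    (c : EuclideanSpace ℝ (Fin n) → ℝ)
    (hc_cont : ContinuousOn c Ω) (hc_nonneg : ∀ x ∈ Ω, 0 ≤ c x)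
    (u : EuclideanSpace ℝ (Fin n) → ℝ)
    (hu_cont : ContinuousOn u (closure Ω))
    (hu_reg : ContDiffOn ℝ 2 u Ω)
    (hu_sub : ∀ x ∈ Ω, c x * u x ≤ laplacian u x)
    (hu_bdry : ∀ x ∈ frontier Ω, u x ≤ 0)
    (hu_bdd : BddAbove (u '' Ω)) :
    ∀ x ∈ Ω, u x ≤ 0 := by
  intro x₀ hx₀
  set T := Real.cos θ with hTdef
  have hπ := Real.pi_pos
  have hT0 : 0 ≤ T := Real.cos_nonneg_of_mem_Icc ⟨by linarith, hθ₁⟩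
  have hT1 : T < 1 := by
    rcases lt_or_eq_of_le (Real.cos_le_one θ) with h | h
    · exact h
    · exfalso
      have h2π : -(2*Real.pi) < θ ∧ θ < 2*Real.pi := ⟨by linarith, by linarith⟩
      have := (Real.cos_eq_one_iff_of_lt_of_lt h2π.1 h2π.2).1 h
      linarith
  have h1T : 0 < 1 - T^2 := by nlinarith
  have hn2 : (2:ℝ) ≤ (n:ℝ) := by exact_mod_cast hn
  set γ := (n:ℝ) / (1 - T^2) with hγdef
  have hγpos : 0 < γ := div_pos (by linarith) h1T
  have hγne : γ ≠ 0 := hγpos.ne'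
  set Cc := 1 + Real.exp γ / γ with hCdef
  have hCpos : 0 < Cc := by positivity
  set μ := min 2⁻¹ (Real.exp (-γ) / (4*Cc*((n:ℝ)+1))) with hμdef
  have hμpos : 0 < μ := lt_min (by norm_num) (by positivity)
  have hμhalf : μ ≤ 2⁻¹ := min_le_left _ _
  have hμb : μ*((n:ℝ)+1)*Cc ≤ Real.exp (-γ)/4 := by
    have h1 : μ ≤ Real.exp (-γ) / (4*Cc*((n:ℝ)+1)) := min_le_right _ _
    have hn1 : (0:ℝ) < (n:ℝ)+1 := by positivity
    calc μ*((n:ℝ)+1)*Cc ≤ (Real.exp (-γ) / (4*Cc*((n:ℝ)+1)))*((n:ℝ)+1)*Cc := by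
          apply mul_le_mul_of_nonneg_right _ hCpos.le
          exact mul_le_mul_of_nonneg_right h1 hn1.le
    _ = Real.exp (-γ)/4 := by field_simp
  -- basic facts about the geometry
  have hpnot : p ∉ closure Ω := by
    intro hp
    have := hcone p hp
    simp at this
  have hyne : ∀ y ∈ closure Ω, y ≠ p := fun y hy h => hpnot (h ▸ hy)
  have hrpos : ∀ y ∈ closure Ω, 0 < rf p y := fun y hy => rf_pos (hyne y hy)
  have htT : ∀ y ∈ closure Ω, qf p e y * (rf p y)⁻¹ ≤ T := by
    intro y hy
    have h1 := hcone y hy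
    have h2 := hrpos y hy
    have h3 : qf p e y < rf p y * T := h1
    rw [← div_eq_mul_inv, div_le_iff₀ h2]
    have h4 : rf p y * T = T * rf p y := mul_comm _ _
    linarith
  have ht1 : ∀ y ∈ closure Ω, -1 ≤ qf p e y * (rf p y)⁻¹ := by
    intro y hy
    have h2 := hrpos y hy
    have h3 : |(⟪y - p, e⟫:ℝ)| ≤ ‖y - p‖ * ‖e‖ := abs_real_inner_le_norm _ _
    rw [he, mul_one] at h3
    have h4 : -(rf p y) ≤ qf p e y := by
      have := neg_abs_le (⟪y - p, e⟫:ℝ)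
      simp only [qf, rf]
      linarith
    rw [← div_eq_mul_inv, le_div_iff₀ h2]
    linarith
  have hE_le : ∀ y ∈ closure Ω, Ef p e γ y ≤ Real.exp γ := by
    intro y hy
    apply Real.exp_le_exp.2
    have h5 : qf p e y * (rf p y)⁻¹ ≤ 1 := le_trans (htT y hy) hT1.le
    calc γ * (qf p e y * (rf p y)⁻¹) ≤ γ * 1 := mul_le_mul_of_nonneg_left h5 hγpos.le
    _ = γ := mul_one γ
  have hf1 : ∀ y ∈ closure Ω, 1 ≤ ff p e γ Cc y := by
    intro y hy
    have h1 := hE_le y hy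
    have h2 : γ⁻¹ * Ef p e γ y ≤ γ⁻¹ * Real.exp γ :=
      mul_le_mul_of_nonneg_left h1 (by positivity)
    have h3 : γ⁻¹ * Real.exp γ = Real.exp γ / γ := (div_eq_inv_mul _ _).symm
    simp only [ff, hCdef]
    linarith
  have hw_ge : ∀ y ∈ closure Ω, rf p y ^ μ ≤ wf p e γ Cc μ y := by
    intro y hy
    have h1 := hf1 y hy
    have h2 : 0 < rf p y ^ μ := Real.rpow_pos_of_pos (hrpos y hy) μ
    calc rf p y ^ μ = rf p y ^ μ * 1 := (mul_one _).symm
    _ ≤ wf p e γ Cc μ y := mul_le_mul_of_nonneg_left h1 h2.le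
  have hw_pos : ∀ y ∈ closure Ω, 0 < wf p e γ Cc μ y := fun y hy =>
    lt_of_lt_of_le (Real.rpow_pos_of_pos (hrpos y hy) μ) (hw_ge y hy)
  have hw_cont : ∀ y ∈ closure Ω, ContinuousAt (wf p e γ Cc μ) y := fun y hy =>
    (hasFDerivAt_wf (hyne y hy) hγne).differentiableAt.continuousAt
  -- main claim
  have key : ∀ ε > 0, u x₀ ≤ ε * wf p e γ Cc μ x₀ := by
    intro ε hε
    by_contra hcon
    push_neg at hcon
    set h := fun y => u y - ε * wf p e γ Cc μ y with hh
    have hhx₀ : 0 < h x₀ := by simp only [hh]; linarith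
    set M := sSup (u '' Ω) with hMdef
    have hM : ∀ y ∈ Ω, u y ≤ M := fun y hy => le_csSup hu_bdd ⟨y, hy, rfl⟩
    set M' := max M 1 with hM'def
    have hM'pos : (0:ℝ) < M' := lt_of_lt_of_le one_pos (le_max_right _ _)
    have hM' : ∀ y ∈ closure Ω, u y ≤ M' := by
      intro y hy
      by_cases hyΩ : y ∈ Ω
      · exact le_trans (hM y hyΩ) (le_max_left _ _)
      · have hfr : y ∈ frontier Ω := by rw [hΩopen.frontier_eq]; exact ⟨hy, hyΩ⟩
        have := hu_bdry y hfr
        linarith [le_max_right M (1:ℝ)]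
    set R := max ((M'/ε) ^ (μ⁻¹:ℝ)) (rf p x₀) + 1 with hRdef
    have hRx₀ : rf p x₀ ≤ R := by
      rw [hRdef]
      have := le_max_right ((M'/ε) ^ (μ⁻¹:ℝ)) (rf p x₀)
      linarith
    have hR_big : ∀ y ∈ closure Ω, R ≤ rf p y → M' ≤ ε * wf p e γ Cc μ y := by
      intro y hy hR
      rw [hRdef] at hR
      have h0 : (0:ℝ) ≤ M'/ε := by positivity
      have h1 : ((M'/ε) ^ (μ⁻¹:ℝ)) ^ μ = M'/ε := by
        rw [← Real.rpow_mul h0, inv_mul_cancel₀ hμpos.ne', Real.rpow_one]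
      have h2 : (M'/ε) ^ (μ⁻¹:ℝ) ≤ rf p y := by
        have := le_max_left ((M'/ε) ^ (μ⁻¹:ℝ)) (rf p x₀)
        linarith
      have h3 : ((M'/ε) ^ (μ⁻¹:ℝ)) ^ μ ≤ rf p y ^ μ :=
        Real.rpow_le_rpow (Real.rpow_nonneg h0 _) h2 hμpos.le
      rw [h1] at h3
      have h4 := hw_ge y hy
      calc M' = ε * (M'/ε) := by field_simp
      _ ≤ ε * (rf p y ^ μ) := mul_le_mul_of_nonneg_left h3 hε.le
      _ ≤ ε * wf p e γ Cc μ y := mul_le_mul_of_nonneg_left h4 hε.le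
    set K := closure Ω ∩ Metric.closedBall p R with hK
    have hKcpt : IsCompact K := (isCompact_closedBall p R).inter_left isClosed_closure
    have hx₀cl : x₀ ∈ closure Ω := subset_closure hx₀
    have hx₀K : x₀ ∈ K := ⟨hx₀cl, by rw [Metric.mem_closedBall, dist_eq_norm]; exact hRx₀⟩
    have hhcont : ContinuousOn h K := by
      apply ContinuousOn.sub (hu_cont.mono inter_subset_left)
      exact continuousOn_const.mul (fun y hy => (hw_cont y hy.1).continuousWithinAt)
    obtain ⟨z, hzK, hzmax⟩ := hKcpt.exists_isMaxOn ⟨x₀, hx₀K⟩ hhcont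
    have hhz : 0 < h z := lt_of_lt_of_le hhx₀ (hzmax hx₀K)
    have hzΩ : z ∈ Ω := by
      by_contra hzo
      have hfr : z ∈ frontier Ω := by rw [hΩopen.frontier_eq]; exact ⟨hzK.1, hzo⟩
      have h1 := hu_bdry z hfr
      have h2 : 0 < ε * wf p e γ Cc μ z := mul_pos hε (hw_pos z hzK.1)
      have h3 : h z ≤ 0 := by simp only [hh]; linarith
      linarith
    have hzR : rf p z < R := by
      by_contra hzr
      push_neg at hzr
      have h5 := hR_big z hzK.1 hzr
      have h6 : h z ≤ 0 := by simp only [hh]; linarith [hM' z hzK.1]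
      linarith
    have hzp : z ≠ p := hyne z hzK.1
    have huz : 0 < u z := by
      have h7 : 0 < ε * wf p e γ Cc μ z := mul_pos hε (hw_pos z hzK.1)
      simp only [hh] at hhz
      linarith
    have hmax : IsLocalMax h z := by
      have hop : IsOpen (Ω ∩ Metric.ball p R) := hΩopen.inter Metric.isOpen_ball
      have hzin : z ∈ Ω ∩ Metric.ball p R :=
        ⟨hzΩ, by rw [Metric.mem_ball, dist_eq_norm]; exact hzR⟩
      filter_upwards [hop.mem_nhds hzin] with y hy
      exact hzmax ⟨subset_closure hy.1, Metric.ball_subset_closedBall hy.2⟩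
    set D := fun y => fderiv ℝ u y
      - ε • ((af p e γ Cc μ y) • innerSL ℝ (y - p) + (bf p e γ μ y) • innerSL ℝ e) with hDdef
    have hD : ∀ᶠ y in nhds z, HasFDerivAt h (D y) y := by
      have hop : IsOpen (Ω ∩ {p}ᶜ) := hΩopen.inter isOpen_compl_singleton
      filter_upwards [hop.mem_nhds ⟨hzΩ, hzp⟩] with y hy
      have hud : DifferentiableAt ℝ u y :=
        (hu_reg.contDiffAt (hΩopen.mem_nhds hy.1)).differentiableAt (by norm_num)
      exact hud.hasFDerivAt.sub ((hasFDerivAt_wf hy.2 hγne).const_mul ε)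
    have hfd2 : DifferentiableAt ℝ (fderiv ℝ u) z := by
      have h2 := hu_reg.contDiffAt (hΩopen.mem_nhds hzΩ)
      exact (h2.fderiv_right (m := 1) (by norm_num)).differentiableAt one_ne_zero
    set Θ := fun i : Fin n =>
      af p e γ Cc μ z * (⟪(EuclideanSpace.single i (1:ℝ)), EuclideanSpace.single i (1:ℝ)⟫:ℝ)
      + a1f p e γ Cc μ z * ((⟪z - p, EuclideanSpace.single i (1:ℝ)⟫:ℝ)
          * (⟪z - p, EuclideanSpace.single i (1:ℝ)⟫:ℝ))
      + 2 * a2f p e γ μ z * ((⟪z - p, EuclideanSpace.single i (1:ℝ)⟫:ℝ)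
          * (⟪e, EuclideanSpace.single i (1:ℝ)⟫:ℝ))
      + b2f p e γ μ z * ((⟪e, EuclideanSpace.single i (1:ℝ)⟫:ℝ)
          * (⟪e, EuclideanSpace.single i (1:ℝ)⟫:ℝ)) with hΘdef
    have keyi : ∀ i : Fin n,
        fderiv ℝ (fun y => fderiv ℝ u y (EuclideanSpace.single i 1)) z
          (EuclideanSpace.single i 1) ≤ ε * Θ i := by
      intro i
      set s := EuclideanSpace.single i (1:ℝ) with hsdef
      have hFdiff : DifferentiableAt ℝ (fun y => fderiv ℝ u y s) z := by
        have happ : DifferentiableAt ℝ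
            (fun L : EuclideanSpace ℝ (Fin n) →L[ℝ] ℝ => L s) (fderiv ℝ u z) :=
          (ContinuousLinearMap.apply ℝ ℝ s).differentiableAt
        exact happ.comp z hfd2
      have hU : HasFDerivAt (fun y => fderiv ℝ u y s)
          (fderiv ℝ (fun y => fderiv ℝ u y s) z) z := hFdiff.hasFDerivAt
      have hA1 := (hasFDerivAt_af (e := e) (γ := γ) (Cc := Cc) (μ := μ) hzp hγne).mul
        (hasFDerivAt_qf (p := p) s)
      have hB1 := (hasFDerivAt_bf (e := e) (γ := γ) (μ := μ) hzp).mul_const ((⟪e, s⟫:ℝ))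
      have hfun : (fun y => D y s)
          = fun y => fderiv ℝ u y s
              - ε * (af p e γ Cc μ y * (⟪y - p, s⟫:ℝ) + bf p e γ μ y * (⟪e, s⟫:ℝ)) := by
        funext y
        simp only [hDdef, ContinuousLinearMap.sub_apply, ContinuousLinearMap.smul_apply,
          ContinuousLinearMap.add_apply, innerSL_apply_apply, smul_eq_mul, qf]
      have hD2 := hU.sub (((hA1.add hB1)).const_mul ε)
      simp only [Pi.sub_def, Pi.add_def, Pi.mul_def] at hD2
      rw [← hfun] at hD2
      have hle := sec_test_dir hmax hD hD2
      simp only [ContinuousLinearMap.sub_apply, ContinuousLinearMap.smul_apply,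
        ContinuousLinearMap.add_apply, innerSL_apply_apply, smul_eq_mul, qf] at hle
      simp only [hΘdef]
      ring_nf at hle ⊢
      linarith
    have hlap : laplacian u z ≤ ε * ∑ i : Fin n, Θ i := by
      rw [laplacian, Finset.mul_sum]
      exact Finset.sum_le_sum fun i _ => keyi i
    have hsum1 := sum_inner_single (z - p) (z - p)
    have hsum2 := sum_inner_single (z - p) e
    have hsum3 := sum_inner_single e e
    have hsum4 : ∑ i : Fin n,
        (⟪(EuclideanSpace.single i (1:ℝ)), EuclideanSpace.single i (1:ℝ)⟫:ℝ) = (n:ℝ) := by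
      have : ∀ i : Fin n,
          (⟪(EuclideanSpace.single i (1:ℝ)), EuclideanSpace.single i (1:ℝ)⟫:ℝ) = 1 := by
        intro i
        simp [EuclideanSpace.inner_single_right]
      rw [Finset.sum_congr rfl (fun i _ => this i)]
      simp
    have hΘsum : ∑ i : Fin n, Θ i
        = a1f p e γ Cc μ z * (rf p z)^2 + 2*(a2f p e γ μ z * qf p e z)
          + (n:ℝ)*af p e γ Cc μ z + b2f p e γ μ z := by
      simp only [hΘdef]
      rw [Finset.sum_add_distrib, Finset.sum_add_distrib, Finset.sum_add_distrib,
        ← Finset.mul_sum, ← Finset.mul_sum, ← Finset.mul_sum, ← Finset.mul_sum,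
        hsum1, hsum2, hsum3, hsum4]
      have hr2 : (⟪z - p, z - p⟫:ℝ) = (rf p z)^2 := by
        rw [real_inner_self_eq_norm_mul_norm, rf, pow_two]
      have hq : (⟪z - p, e⟫:ℝ) = qf p e z := rfl
      have he2 : (⟪e, e⟫:ℝ) = 1 := by
        rw [real_inner_self_eq_norm_mul_norm, he]; norm_num
      rw [hr2, hq, he2]
      ring
    have hSneg : ∑ i : Fin n, Θ i < 0 := by
      rw [hΘsum, S_eq (hrpos z hzK.1).ne']
      have hbr := bracket_neg hn hT0 hT1 hγdef hCdef hμpos hμhalf hμb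
        (ht1 z hzK.1) (htT z hzK.1)
      have hEz : Ef p e γ z = Real.exp (γ * (qf p e z * (rf p z)⁻¹)) := rfl
      have hfz : ff p e γ Cc z = Cc - γ⁻¹ * Ef p e γ z := rfl
      apply mul_neg_of_pos_of_neg
      · have h1 : 0 < rf p z ^ μ := Real.rpow_pos_of_pos (hrpos z hzK.1) μ
        have h2 : 0 < ((rf p z)⁻¹)^2 := pow_pos (inv_pos.2 (hrpos z hzK.1)) 2
        exact mul_pos h1 h2
      · rw [hfz, hEz]
        convert hbr using 2 <;> ring
    have hcu : 0 ≤ c z * u z := mul_nonneg (hc_nonneg z hzΩ) huz.le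
    have hlapz := hu_sub z hzΩ
    have : ε * ∑ i : Fin n, Θ i < 0 := mul_neg_of_pos_of_neg hε hSneg
    linarith
  -- conclude
  by_contra hul
  push_neg at hul
  have hwx₀ : 0 < wf p e γ Cc μ x₀ := hw_pos x₀ (subset_closure hx₀)
  have hε : 0 < u x₀ / (2 * wf p e γ Cc μ x₀) := by positivity
  have hk := key _ hε
  rw [div_mul_eq_mul_div, mul_comm] at hk
  have : u x₀ ≤ u x₀ / 2 := by
    have h2 : (u x₀ * wf p e γ Cc μ x₀) / (2 * wf p e γ Cc μ x₀) = u x₀ / 2 := by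
      rw [mul_comm 2 (wf p e γ Cc μ x₀), ← div_div]
      congr 1
      exact mul_div_cancel_right₀ _ hwx₀.ne'
    calc u x₀ ≤ wf p e γ Cc μ x₀ * u x₀ / (2 * wf p e γ Cc μ x₀) := hk
    _ = u x₀ / 2 := by rw [mul_comm (wf p e γ Cc μ x₀) (u x₀)]; exact h2
  linarith
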